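/- Let n ≥ 2, q = n/(n−1), and β = ∏_{k=0}^{∞} (1 − 1/(q^k + 1)) = ∏_{k=0}^{∞} 1/(1 + (1/q)^k). Then the infinite product converges and e^{−n} ≤ β ≤ e^{−n/2}; in particular 0 < β < 1. -/

import Mathlib

open Manifold Metric Filter
open scoped RealInnerProductSpace Topology

noncomputable section

/-- The norm of a vector of `ℝ^k` (helper, used to take norms of values of `mfderiv`,
whose codomain `TangentSpace 𝓘(ℝ, ℝ^k) y` is definitionally `ℝ^k`). -/
def vnorm {k : ℕ} (v : EuclideanSpace ℝ (Fin k)) : ℝ := ‖v‖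

/-- The real inner product of two vectors of `ℝ^k` (helper, as for `vnorm`). -/
def iprod {k : ℕ} (a b : EuclideanSpace ℝ (Fin k)) : ℝ := ⟪a, b⟫

/-- **The Moser-iteration exponent.**  Let `n ≥ 2`, `q = n/(n-1)`, and
`β = ∏_{k=0}^∞ (1 - 1/(qᵏ+1)) = ∏_{k=0}^∞ 1/(1+(1/q)ᵏ)`.  Then the infinite product
converges and `e^{-n} ≤ β ≤ e^{-n/2}`; in particular `0 < β < 1`. -/
theorem moser_product_bounds (n : ℕ) (hn : 2 ≤ n) (q : ℝ)
    (hq : q = (n : ℝ) / ((n : ℝ) - 1)) :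
    Multipliable (fun k : ℕ => 1 - 1 / (q ^ k + 1)) ∧
    (∏' k : ℕ, (1 - 1 / (q ^ k + 1))) = ∏' k : ℕ, 1 / (1 + (1 / q) ^ k) ∧
    Real.exp (-(n : ℝ)) ≤ ∏' k : ℕ, (1 - 1 / (q ^ k + 1)) ∧
    (∏' k : ℕ, (1 - 1 / (q ^ k + 1))) ≤ Real.exp (-(n : ℝ) / 2) ∧
    0 < ∏' k : ℕ, (1 - 1 / (q ^ k + 1)) ∧
    (∏' k : ℕ, (1 - 1 / (q ^ k + 1))) < 1 := by
  have hn1 : (1 : ℝ) ≤ (n : ℝ) - 1 := by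
    have : (2 : ℝ) ≤ (n : ℝ) := by exact_mod_cast hn
    linarith
  have hnpos : (0 : ℝ) < (n : ℝ) := by linarith
  have hq1 : 1 < q := by
    rw [hq]
    rw [lt_div_iff₀ (by linarith)]
    linarith
  have hq0 : 0 < q := by linarith
  set r : ℝ := 1 / q with hr
  have hr0 : 0 < r := by positivity
  have hr1 : r < 1 := by
    rw [hr, div_lt_one hq0]; exact hq1
  -- r = (n-1)/n, so 1 - r = 1/n
  have hrval : 1 - r = 1 / (n : ℝ) := by
    rw [hr, hq]
    field_simp
    ring
  -- key pointwise identity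
  have hpk : ∀ k : ℕ, 0 < 1 + r ^ k := fun k => by positivity
  have hterm : ∀ k : ℕ, 1 - 1 / (q ^ k + 1) = Real.exp (-(Real.log (1 + r ^ k))) := by
    intro k
    rw [Real.exp_neg, Real.exp_log (hpk k)]
    have hqk : 0 < q ^ k := by positivity
    rw [hr]
    field_simp
    rw [one_div_pow, add_sub_cancel_right, mul_add, mul_one_div_cancel hqk.ne']
    ring
  have hterm2 : ∀ k : ℕ, 1 / (1 + (1 / q) ^ k) = Real.exp (-(Real.log (1 + r ^ k))) := by
    intro k
    rw [Real.exp_neg, Real.exp_log (hpk k), hr, one_div]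
  -- summability of log(1 + r^k)
  have hgeo : Summable (fun k : ℕ => r ^ k) := summable_geometric_of_lt_one hr0.le hr1
  have hlog_le : ∀ k : ℕ, Real.log (1 + r ^ k) ≤ r ^ k := fun k => by
    have := Real.log_le_sub_one_of_pos (hpk k)
    linarith
  have hlog_nonneg : ∀ k : ℕ, 0 ≤ Real.log (1 + r ^ k) := fun k =>
    Real.log_nonneg (by nlinarith [pow_nonneg hr0.le k])
  have hlog_ge : ∀ k : ℕ, r ^ k / 2 ≤ Real.log (1 + r ^ k) := by
    intro k
    have hrk1 : r ^ k ≤ 1 := pow_le_one₀ hr0.le hr1.le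
    have hrk0 : 0 ≤ r ^ k := pow_nonneg hr0.le k
    have h1 : Real.log (1 / (1 + r ^ k)) ≤ 1 / (1 + r ^ k) - 1 :=
      Real.log_le_sub_one_of_pos (by positivity)
    rw [Real.log_div one_ne_zero (hpk k).ne', Real.log_one] at h1
    have h2 : 1 / (1 + r ^ k) - 1 = -(r ^ k / (1 + r ^ k)) := by
      field_simp
      ring
    rw [h2] at h1
    have h3 : r ^ k / (1 + r ^ k) ≤ Real.log (1 + r ^ k) := by linarith
    refine le_trans ?_ h3
    rw [div_le_div_iff₀ two_pos (hpk k)]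
    nlinarith
  have hsum : Summable (fun k : ℕ => Real.log (1 + r ^ k)) :=
    hgeo.of_nonneg_of_le hlog_nonneg hlog_le
  have hS := hsum.neg.hasSum
  have hprod : HasProd (fun k : ℕ => 1 - 1 / (q ^ k + 1))
      (Real.exp (∑' k : ℕ, -(Real.log (1 + r ^ k)))) := by
    have heq : (fun k : ℕ => 1 - 1 / (q ^ k + 1))
        = fun k : ℕ => Real.exp (-(Real.log (1 + r ^ k))) := funext hterm
    rw [heq]
    exact hS.rexp
  have hgsum : ∑' k : ℕ, r ^ k = (n : ℝ) := by
    rw [tsum_geometric_of_lt_one hr0.le hr1, hrval, one_div, inv_inv]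
  have htsum_le : ∑' k : ℕ, Real.log (1 + r ^ k) ≤ (n : ℝ) := by
    rw [← hgsum]
    exact Summable.tsum_le_tsum hlog_le hsum hgeo
  have htsum_ge : (n : ℝ) / 2 ≤ ∑' k : ℕ, Real.log (1 + r ^ k) := by
    have h1 : ∑' k : ℕ, r ^ k / 2 ≤ ∑' k : ℕ, Real.log (1 + r ^ k) :=
      Summable.tsum_le_tsum hlog_ge (hgeo.div_const 2) hsum
    have h2 : ∑' k : ℕ, r ^ k / 2 = (n : ℝ) / 2 := by
      rw [tsum_div_const, hgsum]
    linarith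
  have hptsum : (∏' k : ℕ, (1 - 1 / (q ^ k + 1)))
      = Real.exp (∑' k : ℕ, -(Real.log (1 + r ^ k))) := hprod.tprod_eq
  have htneg : (∑' k : ℕ, -(Real.log (1 + r ^ k))) = -∑' k : ℕ, Real.log (1 + r ^ k) :=
    tsum_neg
  refine ⟨hprod.multipliable, ?_, ?_, ?_, ?_, ?_⟩
  · rw [hptsum, tprod_congr hterm2]
    exact (hS.rexp.tprod_eq).symm
  · rw [hptsum, htneg, Real.exp_le_exp]
    linarith
  · rw [hptsum, htneg, Real.exp_le_exp]
    linarith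
  · rw [hptsum]; positivity
  · rw [hptsum, htneg]
    have : -∑' k : ℕ, Real.log (1 + r ^ k) < 0 := by linarith
    calc Real.exp _ < Real.exp 0 := Real.exp_lt_exp.mpr this
      _ = 1 := Real.exp_zero
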